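/- The matrix M₊ = U Λ₊ Uᵀ obtained by truncating the negative eigenvalues of a symmetric matrix M = U Λ Uᵀ is the closest positive semi-definite matrix to M in Frobenius norm: for every positive semi-definite matrix P, ‖M − M₊‖_F ≤ ‖M − P‖_F. -/

import Mathlib

open Matrix

private lemma frob_eq_trace (d : ℕ) (A : Matrix (Fin d) (Fin d) ℝ) :
    ∑ i, ∑ j, (A i j) ^ 2 = (Aᵀ * A).trace := by
  rw [Finset.sum_comm]
  simp [Matrix.trace, Matrix.mul_apply, Matrix.diag, sq]

private lemma frob_conj (d : ℕ) (U A : Matrix (Fin d) (Fin d) ℝ)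
    (hU : U * Uᵀ = 1) :
    ∑ i, ∑ j, ((U * A * Uᵀ) i j) ^ 2 = ∑ i, ∑ j, (A i j) ^ 2 := by
  have hUt : Uᵀ * U = 1 := mul_eq_one_comm.mp hU
  rw [frob_eq_trace, frob_eq_trace]
  have : (U * A * Uᵀ)ᵀ * (U * A * Uᵀ) = U * (Aᵀ * A) * Uᵀ := by
    simp only [Matrix.transpose_mul, Matrix.transpose_transpose]
    rw [show U * (Aᵀ * Uᵀ) * (U * A * Uᵀ) = U * Aᵀ * (Uᵀ * U) * (A * Uᵀ) by
      noncomm_ring]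
    rw [hUt]
    noncomm_ring
  rw [this, Matrix.trace_mul_cycle, ← Matrix.mul_assoc, hUt, Matrix.one_mul]

theorem truncated_eigendecomposition_closest_psd (d : ℕ)
    (M U : Matrix (Fin d) (Fin d) ℝ) (Λ : Fin d → ℝ)
    (hU : U * Uᵀ = 1) (hM : M = U * diagonal Λ * Uᵀ)
    (Mplus : Matrix (Fin d) (Fin d) ℝ)
    (hMplus : Mplus = U * diagonal (fun i => max (Λ i) 0) * Uᵀ)
    (P : Matrix (Fin d) (Fin d) ℝ) (hP : P.PosSemidef) :
    Real.sqrt (∑ i, ∑ j, ((M - Mplus) i j) ^ 2) ≤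
      Real.sqrt (∑ i, ∑ j, ((M - P) i j) ^ 2) := by
  have hUt : Uᵀ * U = 1 := mul_eq_one_comm.mp hU
  set Q : Matrix (Fin d) (Fin d) ℝ := Uᵀ * P * U with hQ
  have hPQ : P = U * Q * Uᵀ := by
    rw [hQ]
    rw [show U * (Uᵀ * P * U) * Uᵀ = (U * Uᵀ) * P * (U * Uᵀ) by noncomm_ring,
      hU, Matrix.one_mul, Matrix.mul_one]
  have hQpsd : Q.PosSemidef := by
    have := hP.conjTranspose_mul_mul_same (B := U)
    have hc : Uᴴ = Uᵀ := by ext i j; simp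
    rw [hc] at this
    exact this
  have hQdiag : ∀ i, 0 ≤ Q i i := by
    intro i
    have := hQpsd.dotProduct_mulVec_nonneg (Pi.single i 1)
    simpa [dotProduct, Matrix.mulVec, Pi.single_apply, Finset.mul_sum] using this
  -- rewrite both differences as conjugations
  have h1 : M - Mplus = U * (diagonal Λ - diagonal (fun i => max (Λ i) 0)) * Uᵀ := by
    rw [hM, hMplus]; noncomm_ring
  have h2 : M - P = U * (diagonal Λ - Q) * Uᵀ := by
    rw [hM, hPQ]; noncomm_ring
  rw [h1, h2, frob_conj d U _ hU, frob_conj d U _ hU]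
  apply Real.sqrt_le_sqrt
  have key : ∀ i : Fin d,
      ∑ j, ((diagonal Λ - diagonal (fun k => max (Λ k) 0)) i j) ^ 2 ≤
      ∑ j, ((diagonal Λ - Q) i j) ^ 2 := by
    intro i
    have hle : ((diagonal Λ - diagonal (fun k => max (Λ k) 0)) i i) ^ 2 ≤
        ((diagonal Λ - Q) i i) ^ 2 := by
      simp only [Matrix.sub_apply, Matrix.diagonal_apply_eq]
      rcases le_or_gt 0 (Λ i) with h | h
      · rw [max_eq_left h]
        simpa using sq_nonneg (Λ i - Q i i)
      · rw [max_eq_right h.le]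
        nlinarith [hQdiag i, sq_nonneg (Q i i)]
    calc ∑ j, ((diagonal Λ - diagonal (fun k => max (Λ k) 0)) i j) ^ 2
        = ((diagonal Λ - diagonal (fun k => max (Λ k) 0)) i i) ^ 2 := by
          rw [Finset.sum_eq_single i]
          · intro j _ hj
            simp [Matrix.diagonal_apply_ne' _ (by exact hj)]
          · simp
      _ ≤ ((diagonal Λ - Q) i i) ^ 2 := hle
      _ ≤ ∑ j, ((diagonal Λ - Q) i j) ^ 2 := by
          exact Finset.single_le_sum (f := fun j => ((diagonal Λ - Q) i j) ^ 2)
            (fun j _ => sq_nonneg _) (Finset.mem_univ i)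
  exact Finset.sum_le_sum fun i _ => key i
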